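/- A partition π is a basis partition if and only if no part of π_r equals a part of π_b, i.e., no column length of the Ferrers graph of π strictly to the right of the Durfee square equals a row length strictly below the Durfee square. -/

import Mathlib

open Finset
open scoped Classical

namespace BasisPartitions

/-! ### Ordinary partitions -/

/-- The parts of a partition, listed in weakly decreasing order. -/
def sparts {n : ℕ} (π : n.Partition) : List ℕ := π.parts.sort (· ≥ ·)

/-- `conj L j` is the number of parts that are `≥ j`, i.e. the `j`-th part of the
conjugate partition (for `j ≥ 1`). -/
def conj (L : List ℕ) (j : ℕ) : ℕ := L.countP (fun b => j ≤ b)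

/-- The Durfee square size: the largest `k` such that the `k`-th part is `≥ k`. -/
def durfee (L : List ℕ) : ℕ := (List.range L.length).countP (fun i => i + 1 ≤ L.getD i 0)

/-- The `(i+1)`-st successive rank `r_{i+1} = b_{i+1} - c_{i+1}` (0-indexed `i`). -/
def rank (L : List ℕ) (i : ℕ) : ℤ := (L.getD i 0 : ℤ) - (conj L (i + 1) : ℤ)

/-- The successive rank vector `(r_1, ..., r_k)` where `k` is the Durfee square size. -/
def ranks (L : List ℕ) : List ℤ := (List.range (durfee L)).map (rank L)

/-- A basis partition: the partitioned number is minimal among all partitions having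
the same successive rank vector. -/
def IsBasis {n : ℕ} (π : n.Partition) : Prop :=
  ∀ (m : ℕ) (π' : m.Partition), ranks (sparts π') = ranks (sparts π) → n ≤ m

/-- The signature: the number of distinct part sizes below the Durfee square. -/
def sig (L : List ℕ) : ℕ := ((L.drop (durfee L)).dedup).length

/-- `b(n;k)`: the number of basis partitions of `n` with Durfee square size `k`. -/
noncomputable def bCount (n k : ℕ) : ℕ :=
  Nat.card {π : n.Partition // IsBasis π ∧ durfee (sparts π) = k}

/-- `b(n,k,s)`: the number of basis partitions of `n` with Durfee square size `k`
and signature `s`. -/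
noncomputable def bCount3 (n k s : ℕ) : ℕ :=
  Nat.card {π : n.Partition // IsBasis π ∧ durfee (sparts π) = k ∧ sig (sparts π) = s}

/-- `B(n;j)`: the number of basis partitions of `n` with signature `j`. -/
noncomputable def BCount (n j : ℕ) : ℕ :=
  Nat.card {π : n.Partition // IsBasis π ∧ sig (sparts π) = j}

/-- Rogers–Ramanujan condition: exactly `k` parts, consecutive gaps `≥ 2`, last part `≥ 1`. -/
def RR (L : List ℕ) (k : ℕ) : Prop :=
  L.length = k ∧ (∀ i, i + 1 < k → L.getD (i + 1) 0 + 2 ≤ L.getD i 0) ∧ 1 ≤ L.getD (k - 1) 0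

/-- `t(π)` for a Rogers–Ramanujan partition: the number of gaps `> 2`, plus 1 if the
last part is `> 1`. -/
def tRR (L : List ℕ) (k : ℕ) : ℕ :=
  ((Finset.range (k - 1)).filter (fun i => L.getD (i + 1) 0 + 2 < L.getD i 0)).card +
    (if 1 < L.getD (k - 1) 0 then 1 else 0)

/-- Primary condition: exactly `k` parts, each part `≥ k`. -/
def Primary (L : List ℕ) (k : ℕ) : Prop := L.length = k ∧ ∀ x ∈ L, k ≤ x

/-- `t(π)` for a primary partition: the number of strict descents, plus 1 if the
last part is `> k`. -/
def tP (L : List ℕ) (k : ℕ) : ℕ :=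
  ((Finset.range (k - 1)).filter (fun i => L.getD (i + 1) 0 < L.getD i 0)).card +
    (if k < L.getD (k - 1) 0 then 1 else 0)

/-- A complete basis partition: every `j` with `1 ≤ j ≤ k-1` occurs as a part of `π_b`
(a row below the Durfee square) or as a part of `π_r` (a column length strictly to the
right of the Durfee square). -/
def IsComplete {n : ℕ} (π : n.Partition) : Prop :=
  ∀ j : ℕ, 1 ≤ j → j < durfee (sparts π) →
    j ∈ (sparts π).drop (durfee (sparts π)) ∨
      ∃ c : ℕ, durfee (sparts π) < c ∧ conj (sparts π) c = j

/-- `b_c(n)`: the number of complete basis partitions of `n`. -/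
noncomputable def bc (n : ℕ) : ℕ := Nat.card {π : n.Partition // IsBasis π ∧ IsComplete π}

/-! ### Partitions with non-repeating odd parts and their 2-modular graphs -/

/-- Partitions with non-repeating (distinct) odd parts. -/
def Pod {n : ℕ} (π : n.Partition) : Prop := ∀ x, Odd x → π.parts.count x ≤ 1

/-- The size (sum of entries) of the `c`-th column (1-indexed) of the 2-modular graph. -/
def mcolSize (L : List ℕ) (c : ℕ) : ℕ :=
  (L.map (fun x => if 2 * c ≤ x then 2 else if x = 2 * c - 1 then 1 else 0)).sum

/-- The length (number of entries) of the `c`-th column (1-indexed) of the 2-modular graph. -/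
def mcolLen (L : List ℕ) (c : ℕ) : ℕ := L.countP (fun x => 2 * c - 1 ≤ x)

/-- The number of entries in a row of the 2-modular graph recording the part `x`,
namely `⌈x/2⌉`. -/
def mrowLen (x : ℕ) : ℕ := (x + 1) / 2

/-- The 2-modular Durfee square size: the largest `k` with `⌈b_k/2⌉ ≥ k`. -/
def mdurfee (L : List ℕ) : ℕ := (List.range L.length).countP (fun i => 2 * i + 1 ≤ L.getD i 0)

/-- The `(i+1)`-st 2-modular successive rank: (size of row `i+1`) − (size of column `i+1`). -/
def mrank (L : List ℕ) (i : ℕ) : ℤ := (L.getD i 0 : ℤ) - (mcolSize L (i + 1) : ℤ)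

/-- The 2-modular successive rank vector. -/
def mranks (L : List ℕ) : List ℤ := (List.range (mdurfee L)).map (mrank L)

/-- A minimal basis partition in `P_{o,d}`: the partitioned number is minimal among all
partitions with non-repeating odd parts having the same 2-modular successive rank vector. -/
def MinBasis {n : ℕ} (μ : n.Partition) : Prop :=
  Pod μ ∧ ∀ (m : ℕ) (μ' : m.Partition), Pod μ' →
    mranks (sparts μ') = mranks (sparts μ) → n ≤ m

/-- A basis partition in `P_{o,d}`: no row of the 2-modular graph strictly below the Durfee
square has size equal to the size of a column strictly to the right of the Durfee square. -/
def PodBasis {n : ℕ} (π : n.Partition) : Prop :=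
  Pod π ∧ ∀ i, mdurfee (sparts π) ≤ i → i < (sparts π).length →
    ∀ c, mdurfee (sparts π) < c → mcolSize (sparts π) c ≠ (sparts π).getD i 0

/-- The signature of a basis partition in `P_{o,d}`: the number of distinct sizes among the
rows of the 2-modular graph strictly below the Durfee square. -/
def msig (L : List ℕ) : ℕ := ((L.drop (mdurfee L)).dedup).length

/-- The ℓ-signature: the number of distinct lengths among the rows of the 2-modular
graph strictly below the Durfee square. -/
def lsig (L : List ℕ) : ℕ := (((L.drop (mdurfee L)).map mrowLen).dedup).length

/-- `b(n;j)` for `P_{o,d}`: the number of basis partitions of `n` in `P_{o,d}` with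
signature `j`. -/
noncomputable def podB (n j : ℕ) : ℕ := Nat.card {π : n.Partition // PodBasis π ∧ msig (sparts π) = j}

/-- The number of odd parts. -/
def numOdd (L : List ℕ) : ℕ := L.countP (fun x => x % 2 = 1)

/-- A special partition: distinct parts with consecutive differences `≥ 4`, where a
difference equal to `4` is permitted only when both parts are even. -/
def Special (L : List ℕ) : Prop :=
  ∀ i, i + 1 < L.length →
    L.getD (i + 1) 0 + 4 ≤ L.getD i 0 ∧
      (L.getD i 0 = L.getD (i + 1) 0 + 4 → Even (L.getD i 0) ∧ Even (L.getD (i + 1) 0))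

/-- The `i`-th part of a special partition, with the convention that the part just after
the last one is `-2`. -/
def hpart (L : List ℕ) (i : ℕ) : ℤ := if i < L.length then (L.getD i 0 : ℤ) else -2

/-- `ℓ(π)`: the number of gaps `> 4` in a special partition, with the convention
`h_{k+1} = -2`. -/
def ell (L : List ℕ) : ℕ :=
  ((Finset.range L.length).filter (fun i => 4 < hpart L i - hpart L (i + 1))).card


/-! ### Auxiliary lemmas for `statement0` -/

section Aux

open List

/-- `getD` is antitone on a `≥`-sorted list of naturals. -/
lemma getD_anti {L : List ℕ} (hL : List.Pairwise (· ≥ ·) L) {s t : ℕ} (hst : s ≤ t) :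
    L.getD t 0 ≤ L.getD s 0 := by
  by_cases ht : t < L.length
  · have hs : s < L.length := lt_of_le_of_lt hst ht
    rw [List.getD_eq_getElem L 0 ht, List.getD_eq_getElem L 0 hs]
    rcases eq_or_lt_of_le hst with rfl | h
    · exact le_refl _
    · exact hL.rel_get_of_lt (a := ⟨s, hs⟩) (b := ⟨t, ht⟩) h
  · rw [List.getD_eq_default L 0 (not_lt.mp ht)]
    exact Nat.zero_le _

/-- A downward-closed predicate: `countP` over `range` characterizes membership. -/
lemma downclosed_countP (p : ℕ → Bool) (hp : ∀ i j, i ≤ j → p j = true → p i = true) :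
    ∀ (n : ℕ), ∀ i < n, (p i = true ↔ i < (List.range n).countP p) := by
  intro n
  induction n with
  | zero => intro i hi; omega
  | succ n ih =>
    intro i hi
    rw [List.range_succ, List.countP_append]
    have hone : List.countP p [n] = if p n then 1 else 0 := by
      simp [List.countP_cons]
    rw [hone]
    by_cases hn : p n = true
    · have hall : ∀ a ∈ List.range n, p a = true := by
        intro a ha; exact hp a n (le_of_lt (List.mem_range.mp ha)) hn
      have hcnt : (List.range n).countP p = n := by
        rw [List.countP_eq_length.mpr hall, List.length_range]
      rw [hcnt, if_pos hn]
      constructor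
      · intro _; omega
      · intro _
        rcases Nat.lt_succ_iff_lt_or_eq.mp hi with h | rfl
        · exact (ih i h).mpr (by omega)
        · exact hn
    · rw [if_neg hn]
      have hle : (List.range n).countP p ≤ n := by
        have := List.countP_le_length (p := p) (l := List.range n)
        simpa using this
      rcases Nat.lt_succ_iff_lt_or_eq.mp hi with h | rfl
      · simpa using ih i h
      · simp only [Nat.add_zero]
        constructor
        · intro h; exact absurd h hn
        · intro h; omega

lemma durfee_pred_down {L : List ℕ} (hL : List.Pairwise (· ≥ ·) L) :
    ∀ i j, i ≤ j → (decide (j + 1 ≤ L.getD j 0)) = true →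
      (decide (i + 1 ≤ L.getD i 0)) = true := by
  intro i j hij h
  have h' : j + 1 ≤ L.getD j 0 := of_decide_eq_true h
  have := getD_anti hL hij
  simp only [decide_eq_true_eq]
  omega

lemma durfee_le_length (L : List ℕ) : durfee L ≤ L.length := by
  have := List.countP_le_length (p := fun i => decide (i + 1 ≤ L.getD i 0))
    (l := List.range L.length)
  simpa [durfee] using this

lemma durfee_iff {L : List ℕ} (hL : List.Pairwise (· ≥ ·) L) {i : ℕ} (hi : i < L.length) :
    i + 1 ≤ L.getD i 0 ↔ i < durfee L := by
  have := downclosed_countP _ (durfee_pred_down hL) L.length i hi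
  simpa [durfee] using this

lemma getD_ge_of_lt_durfee {L : List ℕ} (hL : List.Pairwise (· ≥ ·) L) {i : ℕ}
    (hi : i < durfee L) : i + 1 ≤ L.getD i 0 := by
  have hlen : i < L.length := lt_of_lt_of_le hi (durfee_le_length L)
  exact (durfee_iff hL hlen).mpr hi

lemma getD_le_of_durfee_le {L : List ℕ} (hL : List.Pairwise (· ≥ ·) L) {i : ℕ}
    (hi : durfee L ≤ i) : L.getD i 0 ≤ i := by
  by_cases hlen : i < L.length
  · by_contra h
    have := (durfee_iff hL hlen).mp (by omega)
    omega
  · rw [List.getD_eq_default L 0 (not_lt.mp hlen)]; omega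

lemma getD_ge_durfee {L : List ℕ} (hL : List.Pairwise (· ≥ ·) L) {i : ℕ}
    (hi : i < durfee L) : durfee L ≤ L.getD i 0 := by
  have h1 := getD_ge_of_lt_durfee hL (show durfee L - 1 < durfee L by omega)
  have h2 := getD_anti hL (show i ≤ durfee L - 1 by omega)
  omega

lemma durfee_eq {L : List ℕ} (hL : List.Pairwise (· ≥ ·) L) {k : ℕ}
    (h1 : ∀ i < k, i + 1 ≤ L.getD i 0) (h2 : L.getD k 0 ≤ k) : durfee L = k := by
  have hklen : k ≤ L.length := by
    by_contra h
    have := h1 L.length (by omega)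
    rw [List.getD_eq_default L 0 (le_refl _)] at this
    omega
  have hles : durfee L ≤ k := by
    by_contra h
    have := getD_ge_of_lt_durfee hL (show k < durfee L by omega)
    omega
  by_contra h
  have hd : durfee L < k := by omega
  have h3 := h1 (durfee L) (by omega)
  have h4 := getD_le_of_durfee_le hL (le_refl (durfee L))
  omega

/-- `conj` vs `getD` for sorted lists. -/
lemma conj_ge_iff {L : List ℕ} (hL : List.Pairwise (· ≥ ·) L) {c : ℕ} (hc : 1 ≤ c) :
    ∀ j, j + 1 ≤ conj L c ↔ c ≤ L.getD j 0 := by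
  induction L with
  | nil => intro j; simp [conj]; omega
  | cons x t ih =>
    have hx : ∀ y ∈ t, y ≤ x := by
      intro y hy; exact (List.pairwise_cons.mp hL).1 y hy
    have ht : List.Pairwise (· ≥ ·) t := (List.pairwise_cons.mp hL).2
    intro j
    have hcnt : conj (x :: t) c = conj t c + (if c ≤ x then 1 else 0) := by
      simp [conj, List.countP_cons]
    match j with
    | 0 =>
      simp only [List.getD_cons_zero]
      rw [hcnt]
      constructor
      · intro h
        by_contra hcx
        rw [if_neg hcx] at h
        have h1 : 1 ≤ conj t c := by omega
        have hg := (ih ht 0).mp h1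
        have h2 : t.getD 0 0 ≤ x := by
          by_cases hlen : 0 < t.length
          · have : t.getD 0 0 ∈ t := by
              rw [List.getD_eq_getElem t 0 hlen]; exact List.getElem_mem hlen
            exact hx _ this
          · rw [List.getD_eq_default t 0 (by omega)]; omega
        omega
      · intro h; rw [if_pos h]; omega
    | j + 1 =>
      simp only [List.getD_cons_succ]
      rw [hcnt, ← ih ht j]
      constructor
      · intro h
        by_cases hcx : c ≤ x
        · rw [if_pos hcx] at h; omega
        · rw [if_neg hcx] at h; omega
      · intro h
        have hcx : c ≤ x := by
          have hget : c ≤ t.getD j 0 := (ih ht j).mp h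
          have hjlen : j < t.length := by
            by_contra hh
            rw [List.getD_eq_default t 0 (by omega)] at hget
            omega
          have : t.getD j 0 ≤ x := by
            rw [List.getD_eq_getElem t 0 hjlen]
            exact hx _ (List.getElem_mem hjlen)
          omega
        rw [if_pos hcx]; omega

lemma mem_take_getD {L : List ℕ} {k : ℕ} {x : ℕ} (hx : x ∈ L.take k) :
    ∃ s < k, s < L.length ∧ x = L.getD s 0 := by
  rcases List.mem_iff_getElem.mp hx with ⟨s, hs, rfl⟩
  have hslen : s < L.length := lt_of_lt_of_le hs (by simp [List.length_take])
  have hsk : s < k := lt_of_lt_of_le hs (by simp [List.length_take])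
  refine ⟨s, hsk, hslen, ?_⟩
  rw [List.getElem_take, List.getD_eq_getElem L 0 hslen]

lemma mem_drop_le {L : List ℕ} (hL : List.Pairwise (· ≥ ·) L) {k x : ℕ}
    (hx : x ∈ L.drop k) : x ≤ L.getD k 0 := by
  rcases List.mem_iff_getElem.mp hx with ⟨t, ht, rfl⟩
  rw [List.getElem_drop]
  have hlen : k + t < L.length := by
    have := List.length_drop (i := k) (l := L)
    omega
  rw [← List.getD_eq_getElem L 0 hlen]
  exact getD_anti hL (by omega)

lemma getD_drop' (L : List ℕ) (m t : ℕ) : (L.drop m).getD t 0 = L.getD (m + t) 0 := by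
  by_cases h : t < (L.drop m).length
  · rw [List.getD_eq_getElem _ 0 h, List.getElem_drop,
      List.getD_eq_getElem L 0 (by simp [List.length_drop] at h; omega)]
  · rw [List.getD_eq_default _ 0 (by omega), List.getD_eq_default]
    simp [List.length_drop] at h
    omega

lemma getD_take' {L : List ℕ} {k i : ℕ} (hik : i < k) :
    (L.take k).getD i 0 = L.getD i 0 := by
  by_cases h : i < L.length
  · have h2 : i < (L.take k).length := by simp [List.length_take]; omega
    rw [List.getD_eq_getElem _ 0 h2, List.getElem_take, List.getD_eq_getElem L 0 h]
  · rw [List.getD_eq_default _ 0 (by simp [List.length_take]; omega),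
      List.getD_eq_default L 0 (by omega)]

/-- list sum as a range sum over `getD`, in `ℤ`. -/
lemma sum_eq_range_getD (L : List ℕ) :
    (L.sum : ℤ) = ∑ i ∈ Finset.range L.length, (L.getD i 0 : ℤ) := by
  induction L with
  | nil => simp
  | cons x t ih =>
    rw [List.sum_cons, List.length_cons, Finset.sum_range_succ', Nat.cast_add, ih]
    simp only [List.getD_cons_succ, List.getD_cons_zero]
    ring

/-- sum of a list with entries in `[1,k]` equals the sum of counts. -/
lemma sum_eq_sum_counts {k : ℕ} {l : List ℕ} (hb : ∀ x ∈ l, 1 ≤ x ∧ x ≤ k) :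
    (l.sum : ℤ) = ∑ i ∈ Finset.range k, ((l.countP fun x => i + 1 ≤ x : ℕ) : ℤ) := by
  induction l with
  | nil => simp
  | cons x t ih =>
    have hx := hb x (List.mem_cons_self (a := x) (l := t))
    have hbt : ∀ y ∈ t, 1 ≤ y ∧ y ≤ k := fun y hy => hb y (List.mem_cons_of_mem x hy)
    rw [List.sum_cons, Nat.cast_add, ih hbt]
    have hstep : ∑ i ∈ Finset.range k, (((x :: t).countP fun y => i + 1 ≤ y : ℕ) : ℤ) =
        ∑ i ∈ Finset.range k, (((t.countP fun y => i + 1 ≤ y : ℕ) : ℤ) +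
          (if i + 1 ≤ x then (1:ℤ) else 0)) := by
      apply Finset.sum_congr rfl
      intro i _
      have hcount : ((x :: t).countP fun y => decide (i + 1 ≤ y)) =
          (t.countP fun y => decide (i + 1 ≤ y)) + (if i + 1 ≤ x then 1 else 0) := by
        simp [List.countP_cons]
      rw [hcount]
      push_cast
      split <;> simp
    rw [hstep, Finset.sum_add_distrib]
    have hfil : Finset.filter (fun i => i + 1 ≤ x) (Finset.range k) = Finset.range x := by
      ext i; simp only [Finset.mem_filter, Finset.mem_range]; omega
    have hxsum : ∑ i ∈ Finset.range k, (if i + 1 ≤ x then (1:ℤ) else 0) = x := by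
      rw [Finset.sum_ite, Finset.sum_const_zero, hfil]
      simp
    rw [hxsum]; ring

/-- Abel summation identity. -/
lemma abel_sum (H : ℕ → ℤ) (k : ℕ) :
    ∑ i ∈ Finset.range k, H i =
      ∑ i ∈ Finset.range k, ((i : ℤ) + 1) * (H i - H (i + 1)) + k * H k := by
  induction k with
  | zero => simp
  | succ k ih =>
    rw [Finset.sum_range_succ, Finset.sum_range_succ (fun i => ((i:ℤ)+1) * (H i - H (i+1))), ih]
    push_cast
    ring

lemma getD_erase_of_ne {l : List ℕ} {a : ℕ} :
    ∀ {t : ℕ}, (∀ s ≤ t, l.getD s 0 ≠ a) → (l.erase a).getD t 0 = l.getD t 0 := by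
  induction l with
  | nil => intro t _; simp
  | cons x tl ih =>
    intro t h
    have hxa : x ≠ a := by
      have := h 0 (Nat.zero_le t)
      simpa using this
    rw [List.erase_cons_tail (by simpa using hxa)]
    match t with
    | 0 => simp
    | t + 1 =>
      simp only [List.getD_cons_succ]
      exact ih (fun s hs => by have := h (s + 1) (by omega); simpa using this)

lemma getD_erase_le {l : List ℕ} (hl : List.Pairwise (· ≥ ·) l) (a : ℕ) (t : ℕ) :
    (l.erase a).getD t 0 ≤ l.getD t 0 := by
  induction l generalizing t with
  | nil => simp
  | cons x tl ih =>
    have htl : List.Pairwise (· ≥ ·) tl := (List.pairwise_cons.mp hl).2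
    by_cases hxa : x = a
    · subst hxa
      rw [List.erase_cons_head]
      match t with
      | 0 =>
        simp only [List.getD_cons_zero]
        by_cases hlen : 0 < tl.length
        · have : tl.getD 0 0 ∈ tl := by
            rw [List.getD_eq_getElem tl 0 hlen]; exact List.getElem_mem hlen
          exact (List.pairwise_cons.mp hl).1 _ this
        · rw [List.getD_eq_default tl 0 (by omega)]; omega
      | t + 1 =>
        simp only [List.getD_cons_succ]
        exact getD_anti htl (by omega)
    · rw [List.erase_cons_tail (by simpa using hxa)]
      match t with
      | 0 => simp
      | t + 1 =>
        simp only [List.getD_cons_succ]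
        exact ih htl t

end Aux


section Core

open List Finset

/-- The part of row `i` to the right of the Durfee square (as an integer). -/
noncomputable def Fz (L : List ℕ) (i : ℕ) : ℤ :=
  if i < durfee L then (L.getD i 0 : ℤ) - durfee L else 0

/-- The number of rows below the Durfee square of size `≥ i+1` (as an integer). -/
noncomputable def Gz (L : List ℕ) (i : ℕ) : ℤ :=
  ((L.drop (durfee L)).countP (fun x => i + 1 ≤ x) : ℤ)

variable {L : List ℕ}

lemma Gz_nonneg (L : List ℕ) (i : ℕ) : 0 ≤ Gz L i := Int.natCast_nonneg _

lemma Fz_mono (hL : List.Pairwise (· ≥ ·) L) {i : ℕ} (hi : i < durfee L) :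
    Fz L (i + 1) ≤ Fz L i := by
  unfold Fz
  rw [if_pos hi]
  by_cases h : i + 1 < durfee L
  · rw [if_pos h]
    have := getD_anti hL (show i ≤ i + 1 by omega)
    push_cast
    omega
  · rw [if_neg h]
    have := getD_ge_durfee hL hi
    push_cast
    omega

lemma Gz_mono (L : List ℕ) (i : ℕ) : Gz L (i + 1) ≤ Gz L i := by
  unfold Gz
  have := List.countP_mono_left
    (p := fun x => decide (i + 2 ≤ x)) (q := fun x => decide (i + 1 ≤ x))
    (l := L.drop (durfee L))
    (by intro x _ hx; simp only [decide_eq_true_eq] at *; omega)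
  exact_mod_cast this

lemma Fz_durfee (L : List ℕ) : Fz L (durfee L) = 0 := by simp [Fz]

lemma Gz_durfee (hL : List.Pairwise (· ≥ ·) L) : Gz L (durfee L) = 0 := by
  unfold Gz
  norm_cast
  rw [List.countP_eq_zero]
  intro x hx
  have h1 : x ≤ L.getD (durfee L) 0 := mem_drop_le hL hx
  have h2 : L.getD (durfee L) 0 ≤ durfee L := getD_le_of_durfee_le hL (le_refl _)
  simp only [decide_eq_true_eq]
  omega

lemma countP_take_durfee (hL : List.Pairwise (· ≥ ·) L) {i : ℕ} (hik : i + 1 ≤ durfee L) :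
    (L.take (durfee L)).countP (fun x => i + 1 ≤ x) = durfee L := by
  have hlen : (L.take (durfee L)).length = durfee L := by
    simp [List.length_take, Nat.min_eq_left (durfee_le_length L)]
  conv_rhs => rw [← hlen]
  rw [List.countP_eq_length]
  intro x hx
  rcases mem_take_getD hx with ⟨s, hsk, _, rfl⟩
  have := getD_ge_durfee hL hsk
  simp only [decide_eq_true_eq]
  omega

lemma conj_eq_add (hL : List.Pairwise (· ≥ ·) L) {i : ℕ} (hi : i < durfee L) :
    (conj L (i + 1) : ℤ) = durfee L + Gz L i := by
  unfold conj Gz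
  conv_lhs => rw [← List.take_append_drop (durfee L) L]
  rw [List.countP_append]
  rw [countP_take_durfee hL (by omega)]
  push_cast
  ring

lemma rank_eq (hL : List.Pairwise (· ≥ ·) L) {i : ℕ} (hi : i < durfee L) :
    rank L i = Fz L i - Gz L i := by
  unfold rank
  rw [conj_eq_add hL hi]
  unfold Fz
  rw [if_pos hi]
  ring

lemma sum_core (hL : List.Pairwise (· ≥ ·) L) (hpos : ∀ x ∈ L, 0 < x) :
    (L.sum : ℤ) = (durfee L : ℤ) ^ 2 +
      ∑ i ∈ Finset.range (durfee L), (Fz L i + Gz L i) := by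
  set k := durfee L with hk
  have hsplit : (L.sum : ℤ) = ((L.take k).sum : ℤ) + ((L.drop k).sum : ℤ) := by
    rw [← Nat.cast_add, List.sum_take_add_sum_drop]
  have htake : ((L.take k).sum : ℤ) = (k : ℤ) ^ 2 + ∑ i ∈ Finset.range k, Fz L i := by
    rw [sum_eq_range_getD]
    have hlen : (L.take k).length = k := by
      simp [List.length_take, Nat.min_eq_left (durfee_le_length L)]; exact durfee_le_length L
    rw [hlen]
    have : ∀ i ∈ Finset.range k, ((L.take k).getD i 0 : ℤ) = (k : ℤ) + Fz L i := by
      intro i hi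
      rw [Finset.mem_range] at hi
      rw [getD_take' hi]
      unfold Fz
      rw [if_pos hi]
      ring
    rw [Finset.sum_congr rfl this, Finset.sum_add_distrib]
    simp [Finset.sum_const, Finset.card_range]
    ring
  have hdrop : ((L.drop k).sum : ℤ) = ∑ i ∈ Finset.range k, Gz L i := by
    apply sum_eq_sum_counts
    intro x hx
    constructor
    · exact hpos x (List.mem_of_mem_drop hx)
    · have h1 : x ≤ L.getD k 0 := mem_drop_le hL hx
      have h2 : L.getD k 0 ≤ k := getD_le_of_durfee_le hL (le_refl _)
      omega
  rw [hsplit, htake, hdrop, Finset.sum_add_distrib]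
  ring

lemma Fz_lt_exists (hL : List.Pairwise (· ≥ ·) L) {i : ℕ} (hi : i < durfee L)
    (h : Fz L (i + 1) < Fz L i) : ∃ c, durfee L < c ∧ conj L c = i + 1 := by
  set k := durfee L with hk
  by_cases h1 : i + 1 < k
  · refine ⟨L.getD (i + 1) 0 + 1, ?_, ?_⟩
    · have := getD_ge_durfee hL h1
      omega
    · have hc1 : 1 ≤ L.getD (i + 1) 0 + 1 := by omega
      have hgt : L.getD (i + 1) 0 < L.getD i 0 := by
        unfold Fz at h
        rw [if_pos hi, if_pos h1] at h
        push_cast at h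
        omega
      have hub := (conj_ge_iff hL hc1 i).mpr (by omega)
      have hlb : ¬ (i + 2 ≤ conj L (L.getD (i + 1) 0 + 1)) := by
        rw [conj_ge_iff hL hc1 (i + 1)]
        omega
      omega
  · have hieq : i + 1 = k := by omega
    refine ⟨k + 1, by omega, ?_⟩
    have hgt : (k : ℤ) < L.getD i 0 := by
      unfold Fz at h
      rw [if_pos hi, if_neg (by omega)] at h
      omega
    have hc1 : 1 ≤ k + 1 := by omega
    have hub := (conj_ge_iff hL hc1 i).mpr (by exact_mod_cast hgt)
    have hlb : ¬ (i + 2 ≤ conj L (k + 1)) := by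
      rw [conj_ge_iff hL hc1 (i + 1)]
      have : L.getD (i + 1) 0 ≤ i + 1 := getD_le_of_durfee_le hL (by omega)
      omega
    omega

lemma Gz_lt_mem {i : ℕ} (h : Gz L (i + 1) < Gz L i) :
    (i + 1) ∈ L.drop (durfee L) := by
  unfold Gz at h
  have he : (fun x => decide (i + 1 + 1 ≤ x)) = (fun x => decide (i + 2 ≤ x)) := rfl
  rw [he] at h
  by_contra hmem
  have : (L.drop (durfee L)).countP (fun x => decide (i + 1 ≤ x)) ≤
      (L.drop (durfee L)).countP (fun x => decide (i + 2 ≤ x)) := by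
    apply List.countP_mono_left
    intro x hx hpx
    simp only [decide_eq_true_eq] at *
    rcases Nat.lt_or_ge (i + 1) x with hc | hc
    · omega
    · have : x = i + 1 := by omega
      subst this
      exact absurd hx hmem
  omega

lemma ranks_length (L : List ℕ) : (ranks L).length = durfee L := by
  simp [ranks]

lemma ranks_getD {i : ℕ} (hi : i < durfee L) : (ranks L).getD i 0 = rank L i := by
  have hlen : i < (ranks L).length := by rw [ranks_length]; exact hi
  rw [List.getD_eq_getElem _ 0 hlen]
  simp [ranks]

lemma ranks_getD_zero {i : ℕ} (hi : durfee L ≤ i) : (ranks L).getD i 0 = 0 := by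
  apply List.getD_eq_default
  rw [ranks_length]
  exact hi

/-- The minimal size of a partition with given rank list. -/
noncomputable def rval (R : List ℤ) : ℤ :=
  (R.length : ℤ) ^ 2 + ∑ j ∈ Finset.range R.length,
    ((j : ℤ) + 1) * |R.getD j 0 - R.getD (j + 1) 0|

lemma rank_diff_eq (hL : List.Pairwise (· ≥ ·) L) {i : ℕ} (hi : i < durfee L) :
    (ranks L).getD i 0 - (ranks L).getD (i + 1) 0 =
      (Fz L i - Fz L (i + 1)) - (Gz L i - Gz L (i + 1)) := by
  rw [ranks_getD hi, rank_eq hL hi]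
  by_cases h : i + 1 < durfee L
  · rw [ranks_getD h, rank_eq hL h]; ring
  · have hieq : i + 1 = durfee L := by omega
    rw [ranks_getD_zero (by omega), hieq, Fz_durfee, Gz_durfee hL]
    ring

lemma sum_core' (hL : List.Pairwise (· ≥ ·) L) (hpos : ∀ x ∈ L, 0 < x) :
    (L.sum : ℤ) = (durfee L : ℤ) ^ 2 + ∑ i ∈ Finset.range (durfee L),
      ((i : ℤ) + 1) * ((Fz L i - Fz L (i + 1)) + (Gz L i - Gz L (i + 1))) := by
  rw [sum_core hL hpos]
  rw [abel_sum (fun i => Fz L i + Gz L i) (durfee L)]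
  rw [Fz_durfee, Gz_durfee hL]
  have : ∀ i ∈ Finset.range (durfee L),
      ((i : ℤ) + 1) * ((Fz L i + Gz L i) - (Fz L (i+1) + Gz L (i+1))) =
      ((i : ℤ) + 1) * ((Fz L i - Fz L (i + 1)) + (Gz L i - Gz L (i + 1))) := by
    intro i _; ring
  rw [Finset.sum_congr rfl this]
  ring

lemma lower_bound (hL : List.Pairwise (· ≥ ·) L) (hpos : ∀ x ∈ L, 0 < x) :
    rval (ranks L) ≤ (L.sum : ℤ) := by
  rw [sum_core' hL hpos]
  unfold rval
  rw [ranks_length]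
  apply add_le_add_right
  apply Finset.sum_le_sum
  intro i hi
  rw [Finset.mem_range] at hi
  rw [rank_diff_eq hL hi]
  have h1 : 0 ≤ Fz L i - Fz L (i + 1) := by
    have := Fz_mono hL hi; omega
  have h2 : 0 ≤ Gz L i - Gz L (i + 1) := by
    have := Gz_mono L i; omega
  have habs : |(Fz L i - Fz L (i + 1)) - (Gz L i - Gz L (i + 1))| ≤
      (Fz L i - Fz L (i + 1)) + (Gz L i - Gz L (i + 1)) := by
    rw [abs_sub_le_iff]
    omega
  have hnn : (0 : ℤ) ≤ (i : ℤ) + 1 := by positivity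
  exact mul_le_mul_of_nonneg_left habs hnn

lemma eq_of_nocommon (hL : List.Pairwise (· ≥ ·) L) (hpos : ∀ x ∈ L, 0 < x)
    (hyp : ∀ c : ℕ, durfee L < c → conj L c ∉ L.drop (durfee L)) :
    (L.sum : ℤ) = rval (ranks L) := by
  rw [sum_core' hL hpos]
  unfold rval
  rw [ranks_length]
  congr 1
  apply Finset.sum_congr rfl
  intro i hi
  rw [Finset.mem_range] at hi
  rw [rank_diff_eq hL hi]
  have h1 : 0 ≤ Fz L i - Fz L (i + 1) := by
    have := Fz_mono hL hi; omega
  have h2 : 0 ≤ Gz L i - Gz L (i + 1) := by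
    have := Gz_mono L i; omega
  have hmin : Fz L i - Fz L (i + 1) = 0 ∨ Gz L i - Gz L (i + 1) = 0 := by
    by_contra hcon
    push_neg at hcon
    obtain ⟨hF, hG⟩ := hcon
    have hFlt : Fz L (i + 1) < Fz L i := by omega
    have hGlt : Gz L (i + 1) < Gz L i := by omega
    obtain ⟨c, hck, hcj⟩ := Fz_lt_exists hL hi hFlt
    have hmem := Gz_lt_mem hGlt
    exact hyp c hck (hcj ▸ hmem)
  have habs : ((Fz L i - Fz L (i + 1)) + (Gz L i - Gz L (i + 1))) =
      |(Fz L i - Fz L (i + 1)) - (Gz L i - Gz L (i + 1))| := by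
    rcases hmin with h | h
    · rw [h]; rw [abs_of_nonpos (by omega)]; ring
    · rw [h]; rw [abs_of_nonneg (by omega)]; ring
  rw [habs]

end Core


section Surgery

open List

lemma map_sub_one_sum : ∀ (l : List ℕ), (∀ x ∈ l, 1 ≤ x) →
    (l.map (· - 1)).sum + l.length = l.sum := by
  intro l
  induction l with
  | nil => simp
  | cons x t ih =>
    intro h
    have hx := h x (List.mem_cons_self (a := x) (l := t))
    have ht := ih (fun y hy => h y (List.mem_cons_of_mem x hy))
    simp only [List.map_cons, List.sum_cons, List.length_cons]
    omega

lemma surgery {L : List ℕ} (hL : List.Pairwise (· ≥ ·) L) (hpos : ∀ x ∈ L, 0 < x)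
    {c : ℕ} (hck : durfee L < c) (hcmem : conj L c ∈ L.drop (durfee L)) :
    ∃ L'' : List ℕ, List.Pairwise (· ≥ ·) L'' ∧ (∀ x ∈ L'', 0 < x) ∧
      ranks L'' = ranks L ∧ L''.sum < L.sum := by
  set k := durfee L with hkdef
  set j := conj L c with hjdef
  clear_value k j
  have hjL : j ∈ L := List.mem_of_mem_drop hcmem
  have hj1 : 1 ≤ j := hpos j hjL
  have hjk : j ≤ k := by
    have h1 : j ≤ L.getD k 0 := mem_drop_le hL hcmem
    have h2 : L.getD k 0 ≤ k := by
      rw [hkdef]; exact getD_le_of_durfee_le hL (le_refl _)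
    omega
  have hklen : k < L.length := by
    by_contra h
    rw [List.drop_eq_nil_of_le (by omega)] at hcmem
    simp at hcmem
  have hc1 : 1 ≤ c := by omega
  have hcj : c ≤ L.getD (j - 1) 0 := by
    refine (conj_ge_iff hL hc1 (j - 1)).mp ?_
    rw [← hjdef]
    omega
  have hcj2 : L.getD j 0 < c := by
    by_contra h
    push_neg at h
    have := (conj_ge_iff hL hc1 j).mpr h
    rw [← hjdef] at this
    omega
  have hgdc : ∀ s, s < j → c ≤ L.getD s 0 := by
    intro s hs
    have := getD_anti hL (show s ≤ j - 1 by omega)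
    omega
  have hjdrop : j ∈ L.drop j := by
    have hdd : L.drop k = (L.drop j).drop (k - j) := by
      rw [List.drop_drop]
      congr 1
      omega
    rw [hdd] at hcmem
    exact List.mem_of_mem_drop hcmem
  set A := (L.take j).map (· - 1) with hAdef
  set B := (L.drop j).erase j with hBdef
  clear_value A B
  have hAlen : A.length = j := by
    rw [hAdef, List.length_map, List.length_take]
    omega
  have hAsorted : List.Pairwise (· ≥ ·) A := by
    rw [hAdef]
    exact List.Pairwise.map _ (fun a b hab => Nat.sub_le_sub_right hab 1)
      (List.Pairwise.sublist (List.take_sublist j L) hL)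
  have hBsorted : List.Pairwise (· ≥ ·) B := by
    rw [hBdef]
    exact List.Pairwise.sublist ((List.erase_sublist (a := j) (l := L.drop j)).trans (List.drop_sublist j L)) hL
  have hAmem : ∀ a ∈ A, c - 1 ≤ a := by
    intro a ha
    rw [hAdef, List.mem_map] at ha
    obtain ⟨x, hx, rfl⟩ := ha
    rcases mem_take_getD hx with ⟨s, hsj, _, rfl⟩
    have := hgdc s hsj
    omega
  have hBmem : ∀ b ∈ B, b ≤ c - 1 := by
    intro b hbm
    have hbd : b ∈ L.drop j := List.mem_of_mem_erase (hBdef ▸ hbm)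
    have h1 : b ≤ L.getD j 0 := mem_drop_le hL hbd
    omega
  have hL'sorted : List.Pairwise (· ≥ ·) (A ++ B) := by
    rw [List.pairwise_append]
    refine ⟨hAsorted, hBsorted, fun a ha b hb => ?_⟩
    have := hAmem a ha
    have := hBmem b hb
    omega
  have hL'pos : ∀ x ∈ A ++ B, 0 < x := by
    intro x hx
    rw [List.mem_append] at hx
    rcases hx with h | h
    · have := hAmem x h; omega
    · exact hpos x (List.mem_of_mem_drop (List.mem_of_mem_erase (hBdef ▸ h)))
  -- getD facts
  have hgA : ∀ i, i < j → (A ++ B).getD i 0 = L.getD i 0 - 1 := by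
    intro i hij
    rw [List.getD_append _ _ _ _ (by omega)]
    have hilen : i < L.length := by omega
    have h2 : i < A.length := by omega
    rw [List.getD_eq_getElem A 0 h2]
    simp only [hAdef, List.getElem_map, List.getElem_take]
    rw [List.getD_eq_getElem L 0 hilen]
  have hgB : ∀ i, j ≤ i → i < k → (A ++ B).getD i 0 = L.getD i 0 := by
    intro i hji hik
    rw [List.getD_append_right _ _ _ _ (by omega), hAlen, hBdef]
    have hne : ∀ s ≤ i - j, (L.drop j).getD s 0 ≠ j := by
      intro s hs
      rw [getD_drop']
      have hjs : j + s < durfee L := by omega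
      have h1 := getD_ge_durfee hL hjs
      omega
    rw [getD_erase_of_ne hne, getD_drop']
    congr 1
    omega
  have hgC : (A ++ B).getD k 0 ≤ L.getD k 0 := by
    rw [List.getD_append_right _ _ _ _ (by omega), hAlen, hBdef]
    have h1 := getD_erase_le (List.Pairwise.sublist (List.drop_sublist j L) hL) j (k - j)
    rw [getD_drop'] at h1
    have he : j + (k - j) = k := by omega
    rw [he] at h1
    exact h1
  have hdurf : durfee (A ++ B) = k := by
    apply durfee_eq hL'sorted
    · intro i hik
      by_cases hij : i < j
      · rw [hgA i hij]
        have := hgdc i hij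
        omega
      · rw [hgB i (by omega) hik]
        exact getD_ge_of_lt_durfee hL (by omega)

    · have : L.getD k 0 ≤ k := getD_le_of_durfee_le hL (by omega)
      omega
  have hrank : ∀ i, i < k → rank (A ++ B) i = rank L i := by
    intro i hik
    have hgd : (L.getD i 0 : ℤ) = ((A ++ B).getD i 0 : ℤ) + (if i < j then 1 else 0) := by
      by_cases hij : i < j
      · rw [hgA i hij, if_pos hij]
        have := hgdc i hij
        push_cast
        omega
      · rw [hgB i (by omega) hik, if_neg hij]; ring
    have hconjrel : conj L (i + 1) = conj (A ++ B) (i + 1) + (if i < j then 1 else 0) := by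
      have hcA : A.countP (fun x => i + 1 ≤ x) = j := by
        conv_rhs => rw [← hAlen]
        rw [List.countP_eq_length]
        intro a ha
        have := hAmem a ha
        simp only [decide_eq_true_eq]
        omega
      have hcT : (L.take j).countP (fun x => i + 1 ≤ x) = j := by
        have hlen : (L.take j).length = j := by
          rw [List.length_take]; omega
        conv_rhs => rw [← hlen]
        rw [List.countP_eq_length]
        intro a ha
        rcases mem_take_getD ha with ⟨s, hsj, _, rfl⟩
        have := hgdc s hsj
        simp only [decide_eq_true_eq]
        omega
      have hsplitL : conj L (i + 1) = (L.take j).countP (fun x => i + 1 ≤ x)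
          + (L.drop j).countP (fun x => i + 1 ≤ x) := by
        unfold conj
        conv_lhs => rw [← List.take_append_drop j L]
        rw [List.countP_append]
      have hperm : L.drop j ~ j :: B := hBdef ▸ List.perm_cons_erase hjdrop
      have hcB : (L.drop j).countP (fun x => i + 1 ≤ x) =
          B.countP (fun x => i + 1 ≤ x) + (if i + 1 ≤ j then 1 else 0) := by
        rw [List.Perm.countP_eq _ hperm, List.countP_cons]
        simp only [decide_eq_true_eq]
      have hsplitL' : conj (A ++ B) (i + 1) = j + B.countP (fun x => i + 1 ≤ x) := by
        unfold conj
        rw [List.countP_append, hcA]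
      rw [hsplitL, hcT, hcB, hsplitL']
      by_cases h : i < j
      · rw [if_pos (show i + 1 ≤ j by omega), if_pos h]
        omega
      · rw [if_neg (show ¬ (i + 1 ≤ j) by omega), if_neg h]
        omega
    unfold rank
    rw [hgd, hconjrel]
    push_cast
    split_ifs <;> ring
  have hranks : ranks (A ++ B) = ranks L := by
    unfold ranks
    rw [hdurf, ← hkdef]
    apply List.map_congr_left
    intro i hi
    exact hrank i (List.mem_range.mp hi)
  have hsum : (A ++ B).sum + 2 * j = L.sum := by
    have htlen : (L.take j).length = j := by rw [List.length_take]; omega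
    have hApos : ∀ x ∈ L.take j, 1 ≤ x := by
      intro x hx
      rcases mem_take_getD hx with ⟨s, hsj, _, rfl⟩
      have := hgdc s hsj
      omega
    have hsA : A.sum + j = (L.take j).sum := by
      have := map_sub_one_sum (L.take j) hApos
      rw [← hAdef, htlen] at this
      exact this
    have hsB : B.sum + j = (L.drop j).sum := by
      have hperm : L.drop j ~ j :: B := hBdef ▸ List.perm_cons_erase hjdrop
      have := hperm.sum_eq
      rw [List.sum_cons] at this
      omega
    have := List.sum_take_add_sum_drop L j
    rw [List.sum_append]
    omega
  refine ⟨A ++ B, hL'sorted, hL'pos, hranks, by omega⟩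

end Surgery


section MainLemmas

open List

lemma sparts_sorted {n : ℕ} (π : n.Partition) : List.Pairwise (· ≥ ·) (sparts π) :=
  Multiset.pairwise_sort _ _

lemma sparts_pos {n : ℕ} (π : n.Partition) : ∀ x ∈ sparts π, 0 < x := by
  intro x hx
  exact π.parts_pos ((Multiset.mem_sort _).mp hx)

lemma sparts_sum {n : ℕ} (π : n.Partition) : (sparts π).sum = n := by
  have h : ((sparts π : List ℕ) : Multiset ℕ) = π.parts := Multiset.sort_eq _ _
  have h2 := congrArg Multiset.sum h
  rw [Multiset.sum_coe] at h2
  rw [h2, π.parts_sum]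

end MainLemmas


theorem statement0 {n : ℕ} (π : n.Partition) :
    IsBasis π ↔
      ∀ c : ℕ, durfee (sparts π) < c →
        conj (sparts π) c ∉ (sparts π).drop (durfee (sparts π)) := by
  constructor
  · intro hb
    by_contra hyp
    push_neg at hyp
    obtain ⟨c, hck, hcmem⟩ := hyp
    obtain ⟨L'', hs, hp, hr, hlt⟩ := surgery (sparts_sorted π) (sparts_pos π) hck hcmem
    set π' : (L''.sum).Partition :=
      ⟨(L'' : Multiset ℕ), fun {x} hx => hp x (Multiset.mem_coe.mp hx),
        Multiset.sum_coe L''⟩ with hπ'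
    have hsp : sparts π' = L'' := by
      apply List.Perm.eq_of_pairwise' (sparts_sorted π') hs
      apply Multiset.coe_eq_coe.mp
      exact Multiset.sort_eq _ _
    have hrr : ranks (sparts π') = ranks (sparts π) := by rw [hsp, hr]
    have hnm := hb L''.sum π' hrr
    rw [sparts_sum π] at hlt
    omega
  · intro hyp m π' hr
    have h1 : (((sparts π).sum : ℕ) : ℤ) = rval (ranks (sparts π)) :=
      eq_of_nocommon (sparts_sorted π) (sparts_pos π) hyp
    have h2 : rval (ranks (sparts π')) ≤ (((sparts π').sum : ℕ) : ℤ) :=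
      lower_bound (sparts_sorted π') (sparts_pos π')
    rw [sparts_sum π] at h1
    rw [sparts_sum π'] at h2
    rw [hr] at h2
    rw [← h1] at h2
    exact_mod_cast h2


end BasisPartitions
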